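/- For integers 0 ≤ k ≤ n, let T(n,k) = 2·C(n,k)²·C(2n+2,n)/C(2n+2,2k+1) ∈ ℚ. Work in R = ℚ[x,y][[t]], let S₁, S₂ ∈ R have constant term 1 and satisfy S₁² = 1 + 4t·x², S₂² = 1 + 4t·y², and set Φ = ∑_{n≥0} (n+2)·(-t)^{n+1} · ∑_{k=0}^{n} T(n,k)·x^{2k}·y^{2n-2k}. Then (x²-y²)²·S₁·S₂·Φ = x² + y² + 8t·x²·y² - (x²+y²)·S₁·S₂. -/

import Mathlib

noncomputable section

open MvPolynomial Nat

/-- The triangle A120406: `T(n,k) = 2·C(n,k)²·C(2n+2,n)/C(2n+2,2k+1)`. -/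
def Tnk (n k : ℕ) : ℚ :=
  2 * (n.choose k : ℚ) ^ 2 * ((2 * n + 2).choose n : ℚ) / ((2 * n + 2).choose (2 * k + 1) : ℚ)

/-- `ℚ[x,y]`, polynomials in two variables over `ℚ`. -/
abbrev Rxy : Type := MvPolynomial (Fin 2) ℚ

def px : Rxy := X 0
def py : Rxy := X 1

/-- `Φ = ∑_{n≥0} (n+2)(-t)^{n+1} ∑_{k=0}^n T(n,k) x^{2k} y^{2n-2k}` in `ℚ[x,y][[t]]`. -/
def Phi : PowerSeries Rxy :=
  PowerSeries.mk fun m => if 1 ≤ m then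
    MvPolynomial.C (((m + 1 : ℕ) : ℚ) * (-1 : ℚ) ^ m) *
      ∑ k ∈ Finset.range m,
        MvPolynomial.C (Tnk (m - 1) k) * px ^ (2 * k) * py ^ (2 * (m - 1) - 2 * k)
  else 0

namespace A120406

/-! ### central binomial coefficients in `ℚ`, extended to `ℤ` indices -/

def dd (n : ℕ) : ℚ := (Nat.centralBinom n : ℚ)

lemma dd_zero : dd 0 = 1 := by simp [dd]

lemma dd_rec (n : ℕ) : ((n : ℚ) + 1) * dd (n + 1) = (4 * n + 2) * dd n := by
  have h := congrArg (Nat.cast : ℕ → ℚ) (Nat.succ_mul_centralBinom_succ n)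
  push_cast at h
  rw [dd, dd]
  push_cast
  linarith [h]

def dz (j : ℤ) : ℚ := if 0 ≤ j then dd j.toNat else 0

lemma dz_ofNat (n : ℕ) : dz (n : ℤ) = dd n := by simp [dz]

lemma dz_neg {j : ℤ} (h : j < 0) : dz j = 0 := by simp [dz, not_le.2 h]

lemma dz_rec (j : ℤ) : ((j : ℚ) + 1) * dz (j + 1) = (4 * (j : ℚ) + 2) * dz j := by
  rcases le_or_gt 0 j with h | h
  · lift j to ℕ using h
    rw [show ((j : ℤ) + 1) = ((j + 1 : ℕ) : ℤ) by push_cast; ring, dz_ofNat, dz_ofNat]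
    push_cast
    exact_mod_cast dd_rec j
  · rcases eq_or_lt_of_le (by omega : j + 1 ≤ 0) with h1 | h1
    · rw [dz_neg h, show ((j:ℚ)) = -1 by exact_mod_cast congrArg (Int.cast : ℤ → ℚ) (by omega : j = -1)]
      ring
    · rw [dz_neg h, dz_neg h1]; ring

/-! ### the convolution `∑ dd k * dd (n-k) = 4^n` -/

lemma reflect_sum (N : ℕ) (g : ℕ → ℚ) (hg : ∀ k ≤ N, g (N - k) = g k) :
    ∑ k ∈ Finset.range (N + 1), (k : ℚ) * g k
      = ∑ k ∈ Finset.range (N + 1), ((N : ℚ) - k) * g k := by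
  have h := Finset.sum_range_reflect (fun k => (k : ℚ) * g k) (N + 1)
  rw [← h]
  apply Finset.sum_congr rfl
  intro k hk
  have hk' : k ≤ N := Nat.lt_succ_iff.mp (Finset.mem_range.mp hk)
  have h1 : N + 1 - 1 - k = N - k := by omega
  rw [h1, hg _ hk', Nat.cast_sub hk']

lemma weighted_sum (N : ℕ) (g : ℕ → ℚ) (hg : ∀ k ≤ N, g (N - k) = g k) :
    2 * (∑ k ∈ Finset.range (N + 1), (k : ℚ) * g k)
      = (N : ℚ) * ∑ k ∈ Finset.range (N + 1), g k := by
  have hr := reflect_sum N g hg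
  calc 2 * (∑ k ∈ Finset.range (N + 1), (k : ℚ) * g k)
      = (∑ k ∈ Finset.range (N + 1), (k : ℚ) * g k)
        + ∑ k ∈ Finset.range (N + 1), ((N : ℚ) - k) * g k := by rw [← hr]; ring
    _ = ∑ k ∈ Finset.range (N + 1), ((k : ℚ) * g k + ((N : ℚ) - k) * g k) := by
        rw [Finset.sum_add_distrib]
    _ = ∑ k ∈ Finset.range (N + 1), (N : ℚ) * g k := by
        apply Finset.sum_congr rfl; intros; ring
    _ = (N : ℚ) * ∑ k ∈ Finset.range (N + 1), g k := by rw [Finset.mul_sum]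

lemma Sq_eq (n : ℕ) : (∑ k ∈ Finset.range (n + 1), dd k * dd (n - k)) = 4 ^ n := by
  induction n with
  | zero => simp [dd]
  | succ n ih =>
    have hgsymm : ∀ N : ℕ, ∀ k ≤ N, dd (N - k) * dd (N - (N - k)) = dd k * dd (N - k) := by
      intro N k hk
      rw [show N - (N - k) = k by omega]
      ring
    have hA := weighted_sum (n + 1) (fun k => dd k * dd (n + 1 - k)) (hgsymm (n + 1))
    have hB := weighted_sum n (fun k => dd k * dd (n - k)) (hgsymm n)
    have hTT : (∑ k ∈ Finset.range (n + 2), (k : ℚ) * (dd k * dd (n + 1 - k)))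
        = 4 * (∑ k ∈ Finset.range (n + 1), (k : ℚ) * (dd k * dd (n - k)))
          + 2 * (∑ k ∈ Finset.range (n + 1), dd k * dd (n - k)) := by
      rw [Finset.sum_range_succ' (fun k => (k : ℚ) * (dd k * dd (n + 1 - k))) (n + 1)]
      simp only [Nat.cast_zero, zero_mul, add_zero]
      rw [Finset.mul_sum, Finset.mul_sum, ← Finset.sum_add_distrib]
      apply Finset.sum_congr rfl
      intro k hk
      have h1 : n + 1 - (k + 1) = n - k := by omega
      have h2 := dd_rec k
      rw [h1]
      push_cast
      linear_combination (dd (n - k)) * h2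
    have hn1 : ((n : ℚ) + 1) ≠ 0 := by positivity
    apply mul_left_cancel₀ hn1
    have hcast : ((n + 1 : ℕ) : ℚ) = (n : ℚ) + 1 := by push_cast; ring
    rw [hcast] at hA
    linear_combination (-1) * hA + 2 * hTT + 4 * hB + (4 * ((n : ℚ) + 1)) * ih

/-! ### the 4-term dz-identity -/

def eCz (m : ℕ) (j : ℤ) : ℚ :=
  2 * (2 * (j : ℚ) + 1) * (2 * ((m : ℚ) - (j : ℚ)) + 1) * dz j * dz ((m : ℤ) - j)

lemma eCz_neg (m : ℕ) {j : ℤ} (h : j < 0) : eCz m j = 0 := by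
  rw [eCz, dz_neg h]; ring

lemma eCz_big (m : ℕ) {j : ℤ} (h : (m : ℤ) < j) : eCz m j = 0 := by
  rw [eCz, dz_neg (by omega : (m : ℤ) - j < 0)]; ring

lemma core_pointwise (m k : ℕ) :
    eCz m ((k : ℤ) - 2) - 2 * eCz m ((k : ℤ) - 1) + eCz m (k : ℤ)
      = ((m : ℚ) + 1) * (dz ((k : ℤ) - 1) * dz ((m : ℤ) + 2 - k)
          + dz (k : ℤ) * dz ((m : ℤ) + 1 - k)
          - 8 * (dz ((k : ℤ) - 1) * dz ((m : ℤ) + 1 - k))) := by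
  have h1 := dz_rec ((k : ℤ) - 2)
  have h2 := dz_rec ((k : ℤ) - 1)
  have h3 := dz_rec ((m : ℤ) - (k : ℤ))
  have h4 := dz_rec ((m : ℤ) + 1 - (k : ℤ))
  rw [show (k : ℤ) - 2 + 1 = (k : ℤ) - 1 by ring] at h1
  rw [show (k : ℤ) - 1 + 1 = (k : ℤ) by ring] at h2
  rw [show (m : ℤ) - (k : ℤ) + 1 = (m : ℤ) + 1 - k by ring] at h3
  rw [show (m : ℤ) + 1 - (k : ℤ) + 1 = (m : ℤ) + 2 - k by ring] at h4
  simp only [eCz]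
  rw [show (m : ℤ) - ((k : ℤ) - 2) = (m : ℤ) + 2 - k by ring,
      show (m : ℤ) - ((k : ℤ) - 1) = (m : ℤ) + 1 - k by ring]
  push_cast at h1 h2 h3 h4 ⊢
  set K := (k : ℚ)
  set M := (m : ℚ)
  set A := dz ((k : ℤ) - 2)
  set B := dz ((k : ℤ) - 1)
  set Cc := dz (k : ℤ)
  set P := dz ((m : ℤ) - (k : ℤ))
  set Q := dz ((m : ℤ) + 1 - (k : ℤ))
  set R := dz ((m : ℤ) + 2 - (k : ℤ))
  linear_combination (-(2 * (M + 1) - 2 * K + 3) * R) * h1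
    + ((2 * (M + 1) - 2 * K - 1) * Q) * h2
    + (-(2 * K + 1) * Cc) * h3
    + ((2 * K - 3) * B) * h4

/-! ### homogeneous polynomial sums -/

def Pol (N : ℕ) (c : ℕ → ℚ) : Rxy :=
  ∑ k ∈ Finset.range (N + 1), MvPolynomial.C (c k) * px ^ (2 * k) * py ^ (2 * (N - k))

lemma Pol_congr {N : ℕ} {c c' : ℕ → ℚ} (h : ∀ k ≤ N, c k = c' k) : Pol N c = Pol N c' := by
  apply Finset.sum_congr rfl
  intro k hk
  rw [h k (Nat.lt_succ_iff.mp (Finset.mem_range.mp hk))]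

lemma C_mul_Pol (N : ℕ) (r : ℚ) (c : ℕ → ℚ) :
    MvPolynomial.C r * Pol N c = Pol N (fun k => r * c k) := by
  rw [Pol, Pol, Finset.mul_sum]
  apply Finset.sum_congr rfl
  intro k _
  rw [C_mul]
  ring

lemma X_mul_Pol (N : ℕ) (c c' : ℕ → ℚ) (h0 : c' 0 = 0) (hs : ∀ k, c' (k + 1) = c k) :
    px ^ 2 * Pol N c = Pol (N + 1) c' := by
  rw [Pol, Pol, Finset.mul_sum]
  conv_rhs => rw [Finset.sum_range_succ'
    (fun k => MvPolynomial.C (c' k) * px ^ (2 * k) * py ^ (2 * (N + 1 - k))) (N + 1)]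
  rw [h0]
  simp only [map_zero, zero_mul, add_zero]
  apply Finset.sum_congr rfl
  intro k _
  rw [hs, show N + 1 - (k + 1) = N - k by omega, show 2 * (k + 1) = 2 * k + 2 by ring, pow_add]
  ring

lemma Y_mul_Pol (N : ℕ) (c c' : ℕ → ℚ) (htop : c' (N + 1) = 0) (hs : ∀ k ≤ N, c' k = c k) :
    py ^ 2 * Pol N c = Pol (N + 1) c' := by
  rw [Pol, Pol, Finset.mul_sum]
  conv_rhs => rw [Finset.sum_range_succ]
  rw [htop]
  simp only [map_zero, zero_mul, add_zero]
  apply Finset.sum_congr rfl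
  intro k hk
  have hk' : k ≤ N := Nat.lt_succ_iff.mp (Finset.mem_range.mp hk)
  rw [hs k hk', show 2 * (N + 1 - k) = 2 * (N - k) + 2 by omega, pow_add]
  ring

lemma Pol_combine (N : ℕ) (r : ℚ) (a b c d e f : ℕ → ℚ)
    (h : ∀ k ≤ N, a k - 2 * b k + c k = r * (d k + e k - 8 * f k)) :
    Pol N a - 2 * Pol N b + Pol N c
      = MvPolynomial.C r * ((Pol N d + Pol N e) - 8 * Pol N f) := by
  simp only [Pol, Finset.mul_sum, ← Finset.sum_add_distrib, ← Finset.sum_sub_distrib]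
  apply Finset.sum_congr rfl
  intro k hk
  have hk' : k ≤ N := Nat.lt_succ_iff.mp (Finset.mem_range.mp hk)
  have hc := congrArg (MvPolynomial.C : ℚ → Rxy) (h k hk')
  simp only [map_sub, map_add, map_mul, map_ofNat] at hc
  linear_combination (px ^ (2 * k) * py ^ (2 * (N - k))) * hc

/-! ### the main polynomial identity, coefficientwise -/

lemma polyIdentity (m : ℕ) :
    (px ^ 2 - py ^ 2) ^ 2 * Pol m (fun k => eCz m (k : ℤ)) =
      MvPolynomial.C ((m : ℚ) + 1) *
        ((px ^ 2 + py ^ 2) * Pol (m + 1) (fun k => dz (k : ℤ) * dz ((m : ℤ) + 1 - k))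
          - 8 * (px ^ 2 * py ^ 2) * Pol m (fun k => dz (k : ℤ) * dz ((m : ℤ) - k))) := by
  have A1 : px ^ 2 * Pol m (fun k => eCz m (k : ℤ)) = Pol (m + 1) (fun k => eCz m ((k : ℤ) - 1)) :=
    X_mul_Pol _ _ _ (eCz_neg m (by norm_num)) (fun k => by congr 1; push_cast; ring)
  have A2 : px ^ 2 * Pol (m + 1) (fun k => eCz m ((k : ℤ) - 1))
      = Pol (m + 2) (fun k => eCz m ((k : ℤ) - 2)) :=
    X_mul_Pol _ _ _ (eCz_neg m (by norm_num)) (fun k => by congr 1; push_cast; ring)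
  have A3 : py ^ 2 * Pol m (fun k => eCz m (k : ℤ)) = Pol (m + 1) (fun k => eCz m (k : ℤ)) :=
    Y_mul_Pol _ _ _ (eCz_big m (by push_cast; omega)) (fun k _ => rfl)
  have A4 : px ^ 2 * Pol (m + 1) (fun k => eCz m (k : ℤ))
      = Pol (m + 2) (fun k => eCz m ((k : ℤ) - 1)) :=
    X_mul_Pol _ _ _ (eCz_neg m (by norm_num)) (fun k => by congr 1; push_cast; ring)
  have A5 : py ^ 2 * Pol (m + 1) (fun k => eCz m ((k : ℤ) - 1))
      = Pol (m + 2) (fun k => eCz m ((k : ℤ) - 1)) :=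
    Y_mul_Pol _ _ _ (eCz_big m (by push_cast; omega)) (fun k _ => rfl)
  have A6 : py ^ 2 * Pol (m + 1) (fun k => eCz m (k : ℤ))
      = Pol (m + 2) (fun k => eCz m (k : ℤ)) :=
    Y_mul_Pol _ _ _ (eCz_big m (by push_cast; omega)) (fun k _ => rfl)
  have R1 : px ^ 2 * Pol (m + 1) (fun k => dz (k : ℤ) * dz ((m : ℤ) + 1 - k))
      = Pol (m + 2) (fun k => dz ((k : ℤ) - 1) * dz ((m : ℤ) + 2 - k)) := by
    apply X_mul_Pol
    · rw [dz_neg (show (((0:ℕ):ℤ) - 1) < 0 by omega)]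
      ring
    · intro k
      push_cast
      ring_nf
  have R2 : py ^ 2 * Pol (m + 1) (fun k => dz (k : ℤ) * dz ((m : ℤ) + 1 - k))
      = Pol (m + 2) (fun k => dz (k : ℤ) * dz ((m : ℤ) + 1 - k)) := by
    apply Y_mul_Pol
    · rw [dz_neg (by push_cast; omega : (m : ℤ) + 1 - ((m : ℕ) + 2 : ℕ) < 0)]; ring
    · intro k _; rfl
  have R3 : py ^ 2 * Pol m (fun k => dz (k : ℤ) * dz ((m : ℤ) - k))
      = Pol (m + 1) (fun k => dz (k : ℤ) * dz ((m : ℤ) - k)) := by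
    apply Y_mul_Pol
    · rw [dz_neg (by push_cast; omega : (m : ℤ) - ((m : ℕ) + 1 : ℕ) < 0)]; ring
    · intro k _; rfl
  have R4 : px ^ 2 * Pol (m + 1) (fun k => dz (k : ℤ) * dz ((m : ℤ) - k))
      = Pol (m + 2) (fun k => dz ((k : ℤ) - 1) * dz ((m : ℤ) + 1 - k)) := by
    apply X_mul_Pol
    · rw [dz_neg (show (((0:ℕ):ℤ) - 1) < 0 by omega)]
      ring
    · intro k
      push_cast
      ring_nf
  have expand : (px ^ 2 - py ^ 2) ^ 2 * Pol m (fun k => eCz m (k : ℤ))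
      = px ^ 2 * (px ^ 2 * Pol m (fun k => eCz m (k : ℤ)))
        - 2 * (py ^ 2 * (px ^ 2 * Pol m (fun k => eCz m (k : ℤ))))
        + py ^ 2 * (py ^ 2 * Pol m (fun k => eCz m (k : ℤ))) := by ring
  have expandR : MvPolynomial.C ((m : ℚ) + 1) *
        ((px ^ 2 + py ^ 2) * Pol (m + 1) (fun k => dz (k : ℤ) * dz ((m : ℤ) + 1 - k))
          - 8 * (px ^ 2 * py ^ 2) * Pol m (fun k => dz (k : ℤ) * dz ((m : ℤ) - k)))
      = MvPolynomial.C ((m : ℚ) + 1) *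
        ((px ^ 2 * Pol (m + 1) (fun k => dz (k : ℤ) * dz ((m : ℤ) + 1 - k))
          + py ^ 2 * Pol (m + 1) (fun k => dz (k : ℤ) * dz ((m : ℤ) + 1 - k)))
          - 8 * (px ^ 2 * (py ^ 2 * Pol m (fun k => dz (k : ℤ) * dz ((m : ℤ) - k))))) := by ring
  rw [expand, A1, A2, A5, A3, A6, expandR, R1, R2, R3, R4]
  exact Pol_combine (m + 2) ((m : ℚ) + 1) _ _ _ _ _ _ (fun k _ => core_pointwise m k)


/-! ### closed form of `Tnk` via central binomial coefficients -/

lemma Tnk_closed (m k : ℕ) (hk : k ≤ m) :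
    ((m : ℚ) + 1) * ((m : ℚ) + 2) * Tnk m k
      = 2 * (2 * (k : ℚ) + 1) * (2 * ((m : ℚ) - k) + 1) * dd k * dd (m - k) := by
  have h1 : (m.choose k : ℚ) = m ! / (k ! * (m - k)!) := Nat.cast_choose ℚ hk
  have h2 : (((2 * m + 2).choose m : ℕ) : ℚ) = (2 * m + 2)! / (m ! * (m + 2)!) := by
    rw [Nat.cast_choose ℚ (by omega), show 2 * m + 2 - m = m + 2 by omega]
  have h3 : (((2 * m + 2).choose (2 * k + 1) : ℕ) : ℚ)
      = (2 * m + 2)! / ((2 * k + 1)! * (2 * (m - k) + 1)!) := by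
    rw [Nat.cast_choose ℚ (by omega), show 2 * m + 2 - (2 * k + 1) = 2 * (m - k) + 1 by omega]
  have h4 : dd k = (2 * k)! / (k ! * k !) := by
    rw [dd, Nat.centralBinom, Nat.cast_choose ℚ (by omega), show 2 * k - k = k by omega]
  have h5 : dd (m - k) = (2 * (m - k))! / ((m - k)! * (m - k)!) := by
    rw [dd, Nat.centralBinom, Nat.cast_choose ℚ (by omega),
      show 2 * (m - k) - (m - k) = m - k by omega]
  have hmk : ((m - k : ℕ) : ℚ) = (m : ℚ) - k := by
    rw [Nat.cast_sub hk]
  have f1 : (((2 * k + 1)! : ℕ) : ℚ) = (2 * (k : ℚ) + 1) * ((2 * k)! : ℕ) := by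
    rw [Nat.factorial_succ]; push_cast; ring
  have f2 : (((2 * (m - k) + 1)! : ℕ) : ℚ)
      = (2 * ((m - k : ℕ) : ℚ) + 1) * ((2 * (m - k))! : ℕ) := by
    rw [Nat.factorial_succ]; push_cast; ring
  have f3 : (((m + 2)! : ℕ) : ℚ) = ((m : ℚ) + 2) * ((m : ℚ) + 1) * (m ! : ℕ) := by
    rw [show m + 2 = (m + 1) + 1 by omega, Nat.factorial_succ, Nat.factorial_succ]
    push_cast; ring
  have nz : ∀ j : ℕ, ((j ! : ℕ) : ℚ) ≠ 0 := fun j =>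
    Nat.cast_ne_zero.mpr (Nat.factorial_ne_zero j)
  have p1 : (2 * (k : ℚ) + 1) ≠ 0 := by positivity
  have p2 : (2 * ((m - k : ℕ) : ℚ) + 1) ≠ 0 := by positivity
  have n1 := nz (2 * m + 2); have n2 := nz m; have n3 := nz (m + 2)
  have n4 := nz k; have n5 := nz (m - k); have n6 := nz (2 * k)
  have n7 := nz (2 * (m - k)); have n8 := nz (2 * k + 1); have n9 := nz (2 * (m - k) + 1)
  rw [Tnk, ← hmk, h1, h2, h3, h4, h5, f1, f2, f3]
  field_simp

/-! ### the explicit inverse square roots -/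

def V1 : PowerSeries Rxy := PowerSeries.mk fun n => MvPolynomial.C ((-1 : ℚ) ^ n * dd n) * px ^ (2 * n)
def V2 : PowerSeries Rxy := PowerSeries.mk fun n => MvPolynomial.C ((-1 : ℚ) ^ n * dd n) * py ^ (2 * n)

lemma coeff_V1_mul_V1 (n : ℕ) :
    PowerSeries.coeff n (V1 * V1) = MvPolynomial.C ((-4 : ℚ) ^ n) * px ^ (2 * n) := by
  rw [PowerSeries.coeff_mul, Finset.Nat.sum_antidiagonal_eq_sum_range_succ_mk]
  have hterm : ∀ k ∈ Finset.range (n + 1),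
      (PowerSeries.coeff k V1) * (PowerSeries.coeff (n - k) V1)
        = MvPolynomial.C (dd k * dd (n - k)) * (MvPolynomial.C ((-1 : ℚ) ^ n) * px ^ (2 * n)) := by
    intro k hk
    have hk' : k ≤ n := Nat.lt_succ_iff.mp (Finset.mem_range.mp hk)
    simp only [V1, PowerSeries.coeff_mk]
    have hp : px ^ (2 * k) * px ^ (2 * (n - k)) = px ^ (2 * n) := by
      rw [← pow_add]; congr 1; omega
    have hsg : ((-1 : ℚ)) ^ k * (-1 : ℚ) ^ (n - k) = (-1 : ℚ) ^ n := by
      rw [← pow_add]; congr 1; omega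
    calc MvPolynomial.C ((-1 : ℚ) ^ k * dd k) * px ^ (2 * k)
          * (MvPolynomial.C ((-1 : ℚ) ^ (n - k) * dd (n - k)) * px ^ (2 * (n - k)))
        = MvPolynomial.C ((-1 : ℚ) ^ k * dd k * ((-1 : ℚ) ^ (n - k) * dd (n - k)))
            * (px ^ (2 * k) * px ^ (2 * (n - k))) := by simp only [C_mul]; ring
      _ = _ := by
          rw [hp, show (-1 : ℚ) ^ k * dd k * ((-1 : ℚ) ^ (n - k) * dd (n - k))
              = dd k * dd (n - k) * (-1 : ℚ) ^ n by
            linear_combination (dd k * dd (n - k)) * hsg]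
          simp only [C_mul]
          ring
  rw [Finset.sum_congr rfl hterm, ← Finset.sum_mul, ← map_sum, Sq_eq]
  rw [← mul_assoc, ← C_mul, show (4 : ℚ) ^ n * (-1 : ℚ) ^ n = (-4 : ℚ) ^ n by
    rw [← mul_pow]; norm_num]

lemma coeff_V2_mul_V2 (n : ℕ) :
    PowerSeries.coeff n (V2 * V2) = MvPolynomial.C ((-4 : ℚ) ^ n) * py ^ (2 * n) := by
  rw [PowerSeries.coeff_mul, Finset.Nat.sum_antidiagonal_eq_sum_range_succ_mk]
  have hterm : ∀ k ∈ Finset.range (n + 1),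
      (PowerSeries.coeff k V2) * (PowerSeries.coeff (n - k) V2)
        = MvPolynomial.C (dd k * dd (n - k)) * (MvPolynomial.C ((-1 : ℚ) ^ n) * py ^ (2 * n)) := by
    intro k hk
    have hk' : k ≤ n := Nat.lt_succ_iff.mp (Finset.mem_range.mp hk)
    simp only [V2, PowerSeries.coeff_mk]
    have hp : py ^ (2 * k) * py ^ (2 * (n - k)) = py ^ (2 * n) := by
      rw [← pow_add]; congr 1; omega
    have hsg : ((-1 : ℚ)) ^ k * (-1 : ℚ) ^ (n - k) = (-1 : ℚ) ^ n := by
      rw [← pow_add]; congr 1; omega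
    calc MvPolynomial.C ((-1 : ℚ) ^ k * dd k) * py ^ (2 * k)
          * (MvPolynomial.C ((-1 : ℚ) ^ (n - k) * dd (n - k)) * py ^ (2 * (n - k)))
        = MvPolynomial.C ((-1 : ℚ) ^ k * dd k * ((-1 : ℚ) ^ (n - k) * dd (n - k)))
            * (py ^ (2 * k) * py ^ (2 * (n - k))) := by simp only [C_mul]; ring
      _ = _ := by
          rw [hp, show (-1 : ℚ) ^ k * dd k * ((-1 : ℚ) ^ (n - k) * dd (n - k))
              = dd k * dd (n - k) * (-1 : ℚ) ^ n by
            linear_combination (dd k * dd (n - k)) * hsg]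
          simp only [C_mul]
          ring
  rw [Finset.sum_congr rfl hterm, ← Finset.sum_mul, ← map_sum, Sq_eq]
  rw [← mul_assoc, ← C_mul, show (4 : ℚ) ^ n * (-1 : ℚ) ^ n = (-4 : ℚ) ^ n by
    rw [← mul_pow]; norm_num]

lemma hC4 : (MvPolynomial.C (-4 : ℚ) : Rxy) = -4 := by
  rw [map_neg, map_ofNat]

lemma V1_inv : (V1 * V1) * (1 + PowerSeries.C (4 * px ^ 2) * PowerSeries.X) = 1 := by
  ext n
  rw [mul_add, mul_one, map_add]
  cases n with
  | zero =>
    simp [PowerSeries.coeff_zero_eq_constantCoeff, map_mul, V1,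
      PowerSeries.constantCoeff_mk, PowerSeries.constantCoeff_X, dd]
  | succ n =>
    have h1 : (V1 * V1) * (PowerSeries.C (4 * px ^ 2) * PowerSeries.X)
        = PowerSeries.C (4 * px ^ 2) * ((V1 * V1) * PowerSeries.X) := by ring
    rw [h1, PowerSeries.coeff_C_mul, PowerSeries.coeff_succ_mul_X, coeff_V1_mul_V1,
      coeff_V1_mul_V1, PowerSeries.coeff_one, if_neg (Nat.succ_ne_zero n)]
    have e1 : ((-4 : ℚ)) ^ (n + 1) = (-4) ^ n * (-4) := pow_succ _ _
    rw [e1, C_mul, hC4, show 2 * (n + 1) = 2 * n + 2 by ring, pow_add]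
    ring

lemma V2_inv : (V2 * V2) * (1 + PowerSeries.C (4 * py ^ 2) * PowerSeries.X) = 1 := by
  ext n
  rw [mul_add, mul_one, map_add]
  cases n with
  | zero =>
    simp [PowerSeries.coeff_zero_eq_constantCoeff, map_mul, V2,
      PowerSeries.constantCoeff_mk, PowerSeries.constantCoeff_X, dd]
  | succ n =>
    have h1 : (V2 * V2) * (PowerSeries.C (4 * py ^ 2) * PowerSeries.X)
        = PowerSeries.C (4 * py ^ 2) * ((V2 * V2) * PowerSeries.X) := by ring
    rw [h1, PowerSeries.coeff_C_mul, PowerSeries.coeff_succ_mul_X, coeff_V2_mul_V2,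
      coeff_V2_mul_V2, PowerSeries.coeff_one, if_neg (Nat.succ_ne_zero n)]
    have e1 : ((-4 : ℚ)) ^ (n + 1) = (-4) ^ n * (-4) := pow_succ _ _
    rw [e1, C_mul, hC4, show 2 * (n + 1) = 2 * n + 2 by ring, pow_add]
    ring

lemma eq_one_of_sq {f : PowerSeries Rxy} (h : f ^ 2 = 1)
    (h0 : PowerSeries.constantCoeff f = 1) : f = 1 := by
  have hfact : (f - 1) * (f + 1) = 0 := by linear_combination h
  rcases mul_eq_zero.mp hfact with h' | h'
  · exact sub_eq_zero.mp h'
  · exfalso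
    have hcc := congrArg (PowerSeries.constantCoeff) h'
    rw [map_add, h0, map_one, map_zero] at hcc
    norm_num at hcc

/-! ### the coefficients of `V1 * V2` -/

lemma coeff_V (n : ℕ) : PowerSeries.coeff n (V1 * V2)
    = MvPolynomial.C ((-1 : ℚ) ^ n) * Pol n (fun k => dd k * dd (n - k)) := by
  rw [PowerSeries.coeff_mul, Finset.Nat.sum_antidiagonal_eq_sum_range_succ_mk, Pol,
    Finset.mul_sum]
  apply Finset.sum_congr rfl
  intro k hk
  have hk' : k ≤ n := Nat.lt_succ_iff.mp (Finset.mem_range.mp hk)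
  simp only [V1, V2, PowerSeries.coeff_mk]
  have hsg : ((-1 : ℚ)) ^ k * (-1 : ℚ) ^ (n - k) = (-1 : ℚ) ^ n := by
    rw [← pow_add]; congr 1; omega
  calc MvPolynomial.C ((-1 : ℚ) ^ k * dd k) * px ^ (2 * k)
        * (MvPolynomial.C ((-1 : ℚ) ^ (n - k) * dd (n - k)) * py ^ (2 * (n - k)))
      = MvPolynomial.C ((-1 : ℚ) ^ k * ((-1 : ℚ) ^ (n - k)) * (dd k * dd (n - k)))
          * (px ^ (2 * k) * py ^ (2 * (n - k))) := by simp only [C_mul]; ring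
    _ = _ := by rw [hsg]; simp only [C_mul]; ring

lemma Tnk_eCz (n k : ℕ) (hk : k ≤ n) :
    ((n : ℚ) + 2) * (-1 : ℚ) ^ (n + 1) * Tnk n k
      = (-1 : ℚ) ^ (n + 1) / ((n : ℚ) + 1) * eCz n (k : ℤ) := by
  have hB := Tnk_closed n k hk
  have he : eCz n (k : ℤ) = 2 * (2 * (k : ℚ) + 1) * (2 * ((n : ℚ) - k) + 1) * dd k * dd (n - k) := by
    rw [eCz, dz_ofNat, show (n : ℤ) - (k : ℤ) = ((n - k : ℕ) : ℤ) by omega, dz_ofNat]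
    push_cast
    ring
  rw [he]
  have hne : ((n : ℚ) + 1) ≠ 0 := by positivity
  field_simp
  linear_combination hB

/-! ### the key power series identity -/

lemma key : PowerSeries.C ((px ^ 2 - py ^ 2) ^ 2) * Phi + PowerSeries.C (px ^ 2 + py ^ 2)
    = (PowerSeries.C (px ^ 2 + py ^ 2)
        + PowerSeries.C (8 * px ^ 2 * py ^ 2) * PowerSeries.X) * (V1 * V2) := by
  refine PowerSeries.ext fun n => ?_
  cases n with
  | zero =>
    simp [PowerSeries.coeff_zero_eq_constantCoeff, map_mul, map_add, Phi, V1, V2,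
      PowerSeries.constantCoeff_mk, PowerSeries.constantCoeff_X, dd]
  | succ n =>
    rw [map_add, PowerSeries.coeff_C_mul, PowerSeries.coeff_C,
      if_neg (Nat.succ_ne_zero n), add_zero, add_mul, map_add, PowerSeries.coeff_C_mul]
    have h1 : PowerSeries.C (8 * px ^ 2 * py ^ 2) * PowerSeries.X * (V1 * V2)
        = PowerSeries.C (8 * px ^ 2 * py ^ 2) * ((V1 * V2) * PowerSeries.X) := by ring
    rw [h1, PowerSeries.coeff_C_mul, PowerSeries.coeff_succ_mul_X, coeff_V, coeff_V]
    have hPhi : PowerSeries.coeff (n + 1) Phi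
        = MvPolynomial.C (((n : ℚ) + 2) * (-1 : ℚ) ^ (n + 1)) * Pol n (fun k => Tnk n k) := by
      rw [Phi, PowerSeries.coeff_mk, if_pos (by omega : 1 ≤ n + 1)]
      congr 1
      · congr 1
        push_cast
        ring
      · rw [Pol]
        simp only [Nat.add_sub_cancel]
        apply Finset.sum_congr rfl
        intro k hk
        have hk' : k ≤ n := Nat.lt_succ_iff.mp (Finset.mem_range.mp hk)
        rw [show 2 * n - 2 * k = 2 * (n - k) by omega]
    rw [hPhi]
    have hPol1 : Pol (n + 1) (fun k => dd k * dd (n + 1 - k))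
        = Pol (n + 1) (fun k => dz (k : ℤ) * dz ((n : ℤ) + 1 - k)) :=
      Pol_congr (fun k hk => by
        rw [dz_ofNat, show (n : ℤ) + 1 - (k : ℤ) = ((n + 1 - k : ℕ) : ℤ) by omega, dz_ofNat])
    have hPol0 : Pol n (fun k => dd k * dd (n - k))
        = Pol n (fun k => dz (k : ℤ) * dz ((n : ℤ) - k)) :=
      Pol_congr (fun k hk => by
        rw [dz_ofNat, show (n : ℤ) - (k : ℤ) = ((n - k : ℕ) : ℤ) by omega, dz_ofNat])
    have hPolT : MvPolynomial.C (((n : ℚ) + 2) * (-1 : ℚ) ^ (n + 1)) * Pol n (fun k => Tnk n k)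
        = MvPolynomial.C ((-1 : ℚ) ^ (n + 1) / ((n : ℚ) + 1)) * Pol n (fun k => eCz n (k : ℤ)) := by
      rw [C_mul_Pol, C_mul_Pol]
      exact Pol_congr (fun k hk => Tnk_eCz n k hk)
    rw [hPolT, hPol1, hPol0]
    have hpoly := polyIdentity n
    have hb : (MvPolynomial.C ((-1 : ℚ) ^ (n + 1) / ((n : ℚ) + 1)) : Rxy)
        * MvPolynomial.C ((n : ℚ) + 1) = MvPolynomial.C ((-1 : ℚ) ^ (n + 1)) := by
      rw [← C_mul]
      congr 1
      have hne : ((n : ℚ) + 1) ≠ 0 := by positivity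
      field_simp
    have hCne : (MvPolynomial.C ((-1 : ℚ) ^ (n + 1)) : Rxy) = - MvPolynomial.C ((-1 : ℚ) ^ n) := by
      rw [← map_neg]
      congr 1
      rw [pow_succ]
      ring
    calc (px ^ 2 - py ^ 2) ^ 2
          * (MvPolynomial.C ((-1 : ℚ) ^ (n + 1) / ((n : ℚ) + 1)) * Pol n (fun k => eCz n (k : ℤ)))
        = MvPolynomial.C ((-1 : ℚ) ^ (n + 1) / ((n : ℚ) + 1))
            * ((px ^ 2 - py ^ 2) ^ 2 * Pol n (fun k => eCz n (k : ℤ))) := by ring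
      _ = MvPolynomial.C ((-1 : ℚ) ^ (n + 1) / ((n : ℚ) + 1))
            * (MvPolynomial.C ((n : ℚ) + 1) *
              ((px ^ 2 + py ^ 2) * Pol (n + 1) (fun k => dz (k : ℤ) * dz ((n : ℤ) + 1 - k))
                - 8 * (px ^ 2 * py ^ 2) * Pol n (fun k => dz (k : ℤ) * dz ((n : ℤ) - k)))) := by
          rw [hpoly]
      _ = (MvPolynomial.C ((-1 : ℚ) ^ (n + 1) / ((n : ℚ) + 1)) * MvPolynomial.C ((n : ℚ) + 1)) *
              ((px ^ 2 + py ^ 2) * Pol (n + 1) (fun k => dz (k : ℤ) * dz ((n : ℤ) + 1 - k))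
                - 8 * (px ^ 2 * py ^ 2) * Pol n (fun k => dz (k : ℤ) * dz ((n : ℤ) - k))) := by
          ring
      _ = MvPolynomial.C ((-1 : ℚ) ^ (n + 1)) *
              ((px ^ 2 + py ^ 2) * Pol (n + 1) (fun k => dz (k : ℤ) * dz ((n : ℤ) + 1 - k))
                - 8 * (px ^ 2 * py ^ 2) * Pol n (fun k => dz (k : ℤ) * dz ((n : ℤ) - k))) := by
          rw [hb]
      _ = (px ^ 2 + py ^ 2) * (MvPolynomial.C ((-1 : ℚ) ^ (n + 1))
              * Pol (n + 1) (fun k => dz (k : ℤ) * dz ((n : ℤ) + 1 - k)))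
            + 8 * px ^ 2 * py ^ 2 * (MvPolynomial.C ((-1 : ℚ) ^ n)
              * Pol n (fun k => dz (k : ℤ) * dz ((n : ℤ) - k))) := by
          rw [hCne]
          ring

end A120406

/-- With `S₁, S₂` the formal square roots (constant term 1) of `1+4tx²` and `1+4ty²`,
`(x²-y²)² S₁ S₂ Φ = x² + y² + 8t x² y² - (x²+y²) S₁ S₂`. -/
theorem phi_identity_a120406
    (S₁ S₂ : PowerSeries Rxy)
    (hS₁c : PowerSeries.constantCoeff S₁ = 1)
    (hS₂c : PowerSeries.constantCoeff S₂ = 1)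
    (hS₁ : S₁ ^ 2 = 1 + PowerSeries.C (4 * px ^ 2) * PowerSeries.X)
    (hS₂ : S₂ ^ 2 = 1 + PowerSeries.C (4 * py ^ 2) * PowerSeries.X) :
    PowerSeries.C ((px ^ 2 - py ^ 2) ^ 2) * S₁ * S₂ * Phi =
      PowerSeries.C (px ^ 2 + py ^ 2)
      + PowerSeries.C (8 * px ^ 2 * py ^ 2) * PowerSeries.X
      - PowerSeries.C (px ^ 2 + py ^ 2) * S₁ * S₂ := by
  have hV1 : S₁ * A120406.V1 = 1 := by
    have hsq : (S₁ * A120406.V1) ^ 2 = 1 := by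
      have h : (S₁ * A120406.V1) ^ 2 = (A120406.V1 * A120406.V1) * S₁ ^ 2 := by ring
      rw [h, hS₁]
      linear_combination A120406.V1_inv
    refine A120406.eq_one_of_sq hsq ?_
    rw [map_mul, hS₁c, one_mul]
    simp [A120406.V1, PowerSeries.constantCoeff_mk, A120406.dd]
  have hV2 : S₂ * A120406.V2 = 1 := by
    have hsq : (S₂ * A120406.V2) ^ 2 = 1 := by
      have h : (S₂ * A120406.V2) ^ 2 = (A120406.V2 * A120406.V2) * S₂ ^ 2 := by ring
      rw [h, hS₂]
      linear_combination A120406.V2_inv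
    refine A120406.eq_one_of_sq hsq ?_
    rw [map_mul, hS₂c, one_mul]
    simp [A120406.V2, PowerSeries.constantCoeff_mk, A120406.dd]
  have hkey := A120406.key
  linear_combination (S₁ * S₂) * hkey
    + ((PowerSeries.C (px ^ 2 + py ^ 2)
        + PowerSeries.C (8 * px ^ 2 * py ^ 2) * PowerSeries.X) * (S₂ * A120406.V2)) * hV1
    + (PowerSeries.C (px ^ 2 + py ^ 2)
        + PowerSeries.C (8 * px ^ 2 * py ^ 2) * PowerSeries.X) * hV2

end
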